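/- Let K be an algebraically closed field of characteristic zero equipped with a nonarchimedean multiplicative absolute value v, let d ≥ 2 be an integer, c ∈ K with v(c) > 1, and φ(z) = z^d + c. Set m = 2 if d = 2 and m = 1 otherwise. If α ∈ K satisfies v(φ^[m](α))^d = v(c), then there exists β ∈ K with φ^[m](β) = 0 and log v(α − β) ≤ −(1/d)·log v(c) − log v(d·1_K) − log v(2·1_K). -/

import Mathlib

open Polynomial

private lemma abv_nat_le_one {K : Type*} [Field K] (v : AbsoluteValue K ℝ)
    (hna : ∀ x y : K, v (x + y) ≤ max (v x) (v y)) (n : ℕ) : v (n : K) ≤ 1 := by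
  induction n with
  | zero => simp
  | succ n ih =>
    have h : v ((n : K) + 1) ≤ max (v (n : K)) (v 1) := hna _ _
    have : max (v (n : K)) (v 1) ≤ 1 := max_le ih (le_of_eq v.map_one)
    push_cast
    exact h.trans this

private lemma abv_add_eq_right {K : Type*} [Field K] (v : AbsoluteValue K ℝ)
    (hna : ∀ x y : K, v (x + y) ≤ max (v x) (v y)) {a b : K} (h : v b < v a) :
    v (a + b) = v a := by
  refine le_antisymm ((hna a b).trans (max_le le_rfl h.le)) ?_
  have h1 : a = (a + b) + (-b) := by ring
  have h2 : v a ≤ max (v (a + b)) (v (-b)) := by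
    conv_lhs => rw [h1]
    exact hna _ _
  rw [v.map_neg] at h2
  rcases le_max_iff.mp h2 with h3 | h3
  · exact h3
  · exact absurd h3 (not_le.mpr h)

private lemma pow_inj_nonneg {a b : ℝ} (ha : 0 ≤ a) (hb : 0 ≤ b) {n : ℕ} (hn : n ≠ 0)
    (h : a ^ n = b ^ n) : a = b := by
  rcases lt_trichotomy a b with h' | h' | h'
  · exact absurd h (ne_of_lt (pow_lt_pow_left₀ h' ha hn))
  · exact h'
  · exact absurd h.symm (ne_of_lt (pow_lt_pow_left₀ h' hb hn))

private lemma abv_multiset_prod {K : Type*} [Field K] (v : AbsoluteValue K ℝ)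
    (s : Multiset K) : v s.prod = (s.map v).prod := by
  induction s using Multiset.induction_on with
  | empty => simp
  | cons a s ih => simp [v.map_mul, ih]

private lemma multiset_prod_map_le {K : Type*} (M : Multiset K) (f g : K → ℝ)
    (h0 : ∀ r ∈ M, 0 ≤ f r) (h : ∀ r ∈ M, f r ≤ g r) :
    (M.map f).prod ≤ (M.map g).prod := by
  induction M using Multiset.induction_on with
  | empty => simp
  | cons a s ih =>
    simp only [Multiset.map_cons, Multiset.prod_cons]
    have hga := (h0 a (Multiset.mem_cons_self a s)).trans (h a (Multiset.mem_cons_self a s))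
    have hps : 0 ≤ (s.map f).prod := by
      apply Multiset.prod_nonneg
      intro x hx
      obtain ⟨r, hr, rfl⟩ := Multiset.mem_map.mp hx
      exact h0 r (Multiset.mem_cons_of_mem hr)
    exact mul_le_mul (h a (Multiset.mem_cons_self a s))
      (ih (fun r hr => h0 r (Multiset.mem_cons_of_mem hr))
        (fun r hr => h r (Multiset.mem_cons_of_mem hr))) hps hga

/-- Key lemma: for a monic polynomial over an algebraically closed field with a
nonarchimedean absolute value, there is a root β with
`v (α - β) * v (P' β) ≤ v (P α)`. -/
private lemma key_root {K : Type*} [Field K] [IsAlgClosed K] (v : AbsoluteValue K ℝ)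
    (hna : ∀ x y : K, v (x + y) ≤ max (v x) (v y)) (P : K[X]) (hmo : P.Monic)
    (hdeg : 0 < P.natDegree) (α : K) :
    ∃ β : K, P.eval β = 0 ∧
      v (α - β) * v (P.derivative.eval β) ≤ v (P.eval α) := by
  classical
  have hsp : P.Splits := IsAlgClosed.splits P
  have hcard : Multiset.card P.roots = P.natDegree := (splits_iff_card_roots).mp hsp
  have hMne : P.roots ≠ 0 := by
    intro h
    rw [h] at hcard
    simp at hcard
    omega
  have hFs : P.roots.toFinset.Nonempty := by
    obtain ⟨r, hr⟩ := Multiset.exists_mem_of_ne_zero hMne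
    exact ⟨r, Multiset.mem_toFinset.mpr hr⟩
  obtain ⟨β, hβF, hmin⟩ := P.roots.toFinset.exists_min_image (fun r => v (α - r)) hFs
  have hβM : β ∈ P.roots := Multiset.mem_toFinset.mp hβF
  have hmin' : ∀ r ∈ P.roots, v (α - β) ≤ v (α - r) := fun r hr =>
    hmin r (Multiset.mem_toFinset.mpr hr)
  refine ⟨β, isRoot_of_mem_roots hβM, ?_⟩
  have hPeq : P = (P.roots.map fun a => X - C a).prod :=
    hsp.eq_prod_roots_of_monic hmo
  have hder : P.derivative.eval β = ((P.roots.erase β).map fun a => β - a).prod := by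
    conv_lhs => rw [hPeq]
    exact eval_multiset_prod_X_sub_C_derivative hβM
  have hcons : β ::ₘ P.roots.erase β = P.roots := Multiset.cons_erase hβM
  have heval : P.eval α = (α - β) * ((P.roots.erase β).map fun a => α - a).prod := by
    conv_lhs => rw [hPeq]
    rw [eval_multiset_prod, ← hcons]
    simp [Multiset.map_map]
  have hvα : v (P.eval α) = v (α - β) * ((P.roots.erase β).map fun a => v (α - a)).prod := by
    rw [heval, v.map_mul, abv_multiset_prod, Multiset.map_map]
    rfl
  have hvder : v (P.derivative.eval β) = ((P.roots.erase β).map fun a => v (β - a)).prod := by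
    rw [hder, abv_multiset_prod, Multiset.map_map]
    rfl
  rw [hvα, hvder]
  refine mul_le_mul_of_nonneg_left ?_ (v.nonneg _)
  refine multiset_prod_map_le _ _ _ (fun r _ => v.nonneg _) (fun r hr => ?_)
  have hrM : r ∈ P.roots := Multiset.mem_of_mem_erase hr
  have h1 : β - r = (β - α) + (α - r) := by ring
  have h2 : v ((β - α) + (α - r)) ≤ max (v (β - α)) (v (α - r)) := hna _ _
  have h3 : v (β - α) = v (α - β) := v.map_sub β α
  rw [h1]
  exact h2.trans (max_le (h3 ▸ hmin' r hrM) le_rfl)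

/-- Final arithmetic-to-log step. -/
private lemma final_log {A t wd w2 : ℝ} (hA : 0 < A) (ht : 1 < t) (hwd : 0 < wd)
    (hw2 : 0 < w2) {d : ℕ} (hd0 : 0 < d) {vc : ℝ} (hvc' : t ^ d = vc)
    (h : A * (t * wd * w2) ≤ 1) :
    Real.log A ≤ -(1 / (d : ℝ)) * Real.log vc - Real.log wd - Real.log w2 := by
  have htpos : (0 : ℝ) < t := lt_trans one_pos ht
  have hlogvc : Real.log vc = d * Real.log t := by
    rw [← hvc', Real.log_pow]
  have hx : (0 : ℝ) < t * wd * w2 := by positivity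
  have hAle : A ≤ (t * wd * w2)⁻¹ := by
    rw [← one_div, le_div_iff₀ hx]
    exact h
  have hlog : Real.log A ≤ Real.log (t * wd * w2)⁻¹ := Real.log_le_log hA hAle
  have hrw : Real.log (t * wd * w2)⁻¹ = -Real.log t - Real.log wd - Real.log w2 := by
    rw [Real.log_inv, Real.log_mul (by positivity) (ne_of_gt hw2),
      Real.log_mul (by positivity) (ne_of_gt hwd)]
    ring
  rw [hrw] at hlog
  rw [hlogvc]
  have hdne : (d : ℝ) ≠ 0 := by positivity
  have hcase : -(1 / (d : ℝ)) * ((d : ℝ) * Real.log t) = -Real.log t := by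
    field_simp
  rw [hcase]
  exact hlog

theorem nonarch_close_to_root {K : Type*} [Field K] [IsAlgClosed K] [CharZero K]
    (v : AbsoluteValue K ℝ)
    (hna : ∀ x y : K, v (x + y) ≤ max (v x) (v y))
    (d : ℕ) (hd : 2 ≤ d) (c : K) (hc : v c > 1)
    (m : ℕ) (hm : m = if d = 2 then 2 else 1)
    (α : K) (hα : v ((fun z : K => z ^ d + c)^[m] α) ^ d = v c) :
    ∃ β : K, (fun z : K => z ^ d + c)^[m] β = 0 ∧
      Real.log (v (α - β)) ≤
        -(1 / d) * Real.log (v c) - Real.log (v (d : K)) - Real.log (v (2 : K)) := by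
  classical
  have hw2 : 0 < v (2 : K) := v.pos (by norm_num)
  have hw2le : v (2 : K) ≤ 1 := by
    have := abv_nat_le_one v hna 2
    push_cast at this
    exact this
  have hwd : 0 < v (d : K) := v.pos (Nat.cast_ne_zero.mpr (by omega))
  by_cases hd2 : d = 2
  · -- case d = 2, m = 2
    subst hd2
    have hm2 : m = 2 := by simpa using hm
    subst hm2
    set P : K[X] := ((X : K[X]) ^ 2 + C c) ^ 2 + C c with hP
    have hmono : ((X : K[X]) ^ 2 + C c).Monic := monic_X_pow_add_C c (by norm_num)
    have hmono2 : (((X : K[X]) ^ 2 + C c) ^ 2).Monic := hmono.pow _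
    have hnd2 : (((X : K[X]) ^ 2 + C c) ^ 2).natDegree = 4 := by
      rw [natDegree_pow, natDegree_X_pow_add_C]
    have hPmo : P.Monic := by
      refine hmono2.add_of_left ?_
      refine lt_of_le_of_lt degree_C_le ?_
      rw [Polynomial.degree_eq_natDegree hmono2.ne_zero, hnd2]
      norm_num
    have hPdeg : 0 < P.natDegree := by
      rw [hP, natDegree_add_C, hnd2]
      norm_num
    have hiter : ∀ x : K, (fun z : K => z ^ 2 + c)^[2] x = (x ^ 2 + c) ^ 2 + c := by
      intro x
      rw [show (2 : ℕ) = 1 + 1 from rfl, Function.iterate_succ_apply', Function.iterate_one]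
    have hPevalα : P.eval α = (α ^ 2 + c) ^ 2 + c := by simp [hP]
    have hα' : v (P.eval α) ^ 2 = v c := by
      rw [hPevalα, ← hiter α]
      exact hα
    obtain ⟨β, hβroot, hkey⟩ := key_root v hna P hPmo hPdeg α
    have hβ0 : (β ^ 2 + c) ^ 2 + c = 0 := by
      have := hβroot
      simpa [hP] using this
    have hβsq : (β ^ 2 + c) ^ 2 = -c := eq_neg_of_add_eq_zero_left hβ0
    set t := v (β ^ 2 + c) with ht
    have ht2 : t ^ 2 = v c := by rw [ht, ← v.map_pow, hβsq, v.map_neg]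
    have ht1 : 1 < t := by
      by_contra h
      push_neg at h
      have h2 : t ^ 2 ≤ 1 := pow_le_one₀ (v.nonneg _) h
      rw [ht2] at h2
      linarith
    have htpos : 0 < t := lt_trans one_pos ht1
    have hvPα : v (P.eval α) = t :=
      pow_inj_nonneg (v.nonneg _) (v.nonneg _) two_ne_zero (by rw [hα', ht2])
    have hPane : P.eval α ≠ 0 := by
      intro h
      rw [h, v.map_zero] at hvPα
      linarith
    have hvβ : v β = t := by
      have hb2 : β ^ 2 = (-c) + (β ^ 2 + c) := by ring
      have hlt : v (β ^ 2 + c) < v (-c) := by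
        rw [v.map_neg, ← ht2, ← ht]
        nlinarith
      have hvb2 : v (β ^ 2) = v c := by
        rw [hb2, abv_add_eq_right v hna hlt, v.map_neg]
      refine pow_inj_nonneg (v.nonneg _) (v.nonneg _) two_ne_zero ?_
      rw [← v.map_pow, hvb2, ht2]
    have hD : P.derivative.eval β = 2 * (β ^ 2 + c) * (2 * β) := by
      simp [hP, derivative_pow, derivative_X_pow]
    have hvD : v (P.derivative.eval β) = v 2 * t * (v 2 * t) := by
      rw [hD, v.map_mul, v.map_mul, v.map_mul, hvβ, ← ht]
    rw [hvD, hvPα] at hkey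
    have hAβpos : 0 < v (α - β) := by
      refine v.pos (sub_ne_zero.mpr ?_)
      intro h
      exact hPane (by rw [h]; exact hβroot)
    have hmul : v (α - β) * (t * v (2 : K) * v (2 : K)) ≤ 1 := by
      have h1 : v (α - β) * (t * v (2 : K) * v (2 : K)) * t ≤ 1 * t := by
        calc v (α - β) * (t * v (2 : K) * v (2 : K)) * t
            = v (α - β) * (v (2 : K) * t * (v (2 : K) * t)) := by ring
          _ ≤ t := hkey
          _ = 1 * t := (one_mul t).symm
      exact le_of_mul_le_mul_right h1 htpos
    refine ⟨β, by rw [hiter β]; exact hβ0, ?_⟩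
    have hfin := final_log hAβpos ht1 hw2 hw2 (d := 2) (by norm_num) ht2 hmul
    simpa using hfin
  · -- case d ≥ 3, m = 1
    have hm1 : m = 1 := by simp [hm, hd2]
    subst hm1
    have hd3 : 3 ≤ d := by omega
    set P : K[X] := (X : K[X]) ^ d + C c with hP
    have hPmo : P.Monic := monic_X_pow_add_C c (by omega)
    have hPdeg : 0 < P.natDegree := by
      rw [hP, natDegree_X_pow_add_C]
      omega
    have hPevalα : P.eval α = α ^ d + c := by simp [hP]
    have hα' : v (P.eval α) ^ d = v c := by
      rw [hPevalα]
      simpa using hα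
    obtain ⟨β, hβroot, hkey⟩ := key_root v hna P hPmo hPdeg α
    have hβ0 : β ^ d + c = 0 := by simpa [hP] using hβroot
    have hβd : β ^ d = -c := eq_neg_of_add_eq_zero_left hβ0
    set t := v β with ht
    have htd : t ^ d = v c := by rw [ht, ← v.map_pow, hβd, v.map_neg]
    have ht1 : 1 < t := by
      by_contra h
      push_neg at h
      have h2 : t ^ d ≤ 1 := pow_le_one₀ (v.nonneg _) h
      rw [htd] at h2
      linarith
    have htpos : 0 < t := lt_trans one_pos ht1
    have hdne : d ≠ 0 := by omega
    have hvPα : v (P.eval α) = t :=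
      pow_inj_nonneg (v.nonneg _) (v.nonneg _) hdne (by rw [hα', htd])
    have hPane : P.eval α ≠ 0 := by
      intro h
      rw [h, v.map_zero] at hvPα
      linarith
    have hD : P.derivative.eval β = (d : K) * β ^ (d - 1) := by
      have : P.derivative = (C (d : K)) * (X : K[X]) ^ (d - 1) := by
        rw [hP, derivative_add, derivative_C, derivative_X_pow, add_zero]
      rw [this]
      simp
    have hvD : v (P.derivative.eval β) = v (d : K) * t ^ (d - 1) := by
      rw [hD, v.map_mul, v.map_pow, ← ht]
    rw [hvD, hvPα] at hkey
    have hAβpos : 0 < v (α - β) := by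
      refine v.pos (sub_ne_zero.mpr ?_)
      intro h
      exact hPane (by rw [h]; exact hβroot)
    have hpow : t ^ 2 ≤ t ^ (d - 1) := pow_le_pow_right₀ ht1.le (by omega)
    have hmul : v (α - β) * (t * v (d : K) * v (2 : K)) ≤ 1 := by
      have h1 : v (α - β) * (t * v (d : K) * v (2 : K)) * t ^ (d - 1)
          ≤ 1 * t ^ (d - 1) := by
        calc v (α - β) * (t * v (d : K) * v (2 : K)) * t ^ (d - 1)
            = (v (α - β) * (v (d : K) * t ^ (d - 1))) * (t * v (2 : K)) := by ring
          _ ≤ t * (t * v (2 : K)) := by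
              refine mul_le_mul_of_nonneg_right hkey (by positivity)
          _ = t ^ 2 * v (2 : K) := by ring
          _ ≤ t ^ (d - 1) * 1 := mul_le_mul hpow hw2le hw2.le (by positivity)
          _ = 1 * t ^ (d - 1) := by ring
      exact le_of_mul_le_mul_right h1 (by positivity)
    refine ⟨β, by simpa using hβ0, ?_⟩
    exact final_log hAβpos ht1 hwd hw2 (by omega) htd hmul
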